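/- Let F be a finite field and let m be even. The family of functions h(x_1, ..., x_m) = (a_1 + x_1)(a_2 + x_2) + (a_3 + x_3)(a_4 + x_4) + ... + (a_{m-1} + x_{m-1})(a_m + x_m), indexed by keys a_1, ..., a_m chosen independently and uniformly from F, is Δ-universal: for any c ∈ F and any two distinct inputs in F^m, the probability that the hash values differ by c is at most 1/|F|. -/

import Mathlib

open Classical in
noncomputable def prob {K : Type*} [Fintype K] (P : K → Prop) : ℝ :=
  ((Finset.univ.filter P).card : ℝ) / (Fintype.card K)

theorem Hsum_lt0 {n : ℕ} (i : Fin n) : 2 * i.1 < 2 * n := by have := i.2; omega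

theorem Hsum_lt1 {n : ℕ} (i : Fin n) : 2 * i.1 + 1 < 2 * n := by have := i.2; omega

def Hsum {F : Type*} [Field F] {n : ℕ} (x a : Fin (2 * n) → F) : F :=
  ∑ i : Fin n, (a ⟨2 * i.1, Hsum_lt0 i⟩ + x ⟨2 * i.1, Hsum_lt0 i⟩) *
      (a ⟨2 * i.1 + 1, Hsum_lt1 i⟩ + x ⟨2 * i.1 + 1, Hsum_lt1 i⟩)

lemma Hsum_update_odd {F : Type*} [Field F] {n : ℕ} (x a : Fin (2 * n) → F) (k : Fin n) (v : F) :
    Hsum x (Function.update a ⟨2 * k.1 + 1, Hsum_lt1 k⟩ v) =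
      Hsum x (Function.update a ⟨2 * k.1 + 1, Hsum_lt1 k⟩ 0) +
        v * (a ⟨2 * k.1, Hsum_lt0 k⟩ + x ⟨2 * k.1, Hsum_lt0 k⟩) := by
  classical
  unfold Hsum
  rw [← Finset.add_sum_erase _ _ (Finset.mem_univ k), ← Finset.add_sum_erase _ _ (Finset.mem_univ k)]
  have hrest : ∀ w : F, ∀ i ∈ Finset.univ.erase k,
      (Function.update a ⟨2 * k.1 + 1, by have := k.2; omega⟩ w ⟨2 * i.1, by have := i.2; omega⟩ +
          x ⟨2 * i.1, by have := i.2; omega⟩) *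
        (Function.update a ⟨2 * k.1 + 1, by have := k.2; omega⟩ w ⟨2 * i.1 + 1, by have := i.2; omega⟩ +
          x ⟨2 * i.1 + 1, by have := i.2; omega⟩) =
      (a ⟨2 * i.1, by have := i.2; omega⟩ + x ⟨2 * i.1, by have := i.2; omega⟩) *
        (a ⟨2 * i.1 + 1, by have := i.2; omega⟩ + x ⟨2 * i.1 + 1, by have := i.2; omega⟩) := by
    intro w i hi
    have hik : i ≠ k := Finset.ne_of_mem_erase hi
    have h1 : (⟨2 * i.1, by have := i.2; omega⟩ : Fin (2 * n)) ≠ ⟨2 * k.1 + 1, by have := k.2; omega⟩ := by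
      simp only [ne_eq, Fin.mk.injEq]; omega
    have h2 : (⟨2 * i.1 + 1, by have := i.2; omega⟩ : Fin (2 * n)) ≠ ⟨2 * k.1 + 1, by have := k.2; omega⟩ := by
      simp only [ne_eq, Fin.mk.injEq]
      have : i.1 ≠ k.1 := fun h => hik (Fin.ext h)
      omega
    rw [Function.update_of_ne h1, Function.update_of_ne h2]
  rw [Finset.sum_congr rfl (hrest v), Finset.sum_congr rfl (hrest 0)]
  have he : (⟨2 * k.1, by have := k.2; omega⟩ : Fin (2 * n)) ≠ ⟨2 * k.1 + 1, by have := k.2; omega⟩ := by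
    simp only [ne_eq, Fin.mk.injEq]; omega
  rw [Function.update_of_ne he, Function.update_of_ne he, Function.update_self, Function.update_self]
  ring

lemma Hsum_update_even {F : Type*} [Field F] {n : ℕ} (x a : Fin (2 * n) → F) (k : Fin n) (v : F) :
    Hsum x (Function.update a ⟨2 * k.1, Hsum_lt0 k⟩ v) =
      Hsum x (Function.update a ⟨2 * k.1, Hsum_lt0 k⟩ 0) +
        v * (a ⟨2 * k.1 + 1, Hsum_lt1 k⟩ + x ⟨2 * k.1 + 1, Hsum_lt1 k⟩) := by
  classical
  unfold Hsum
  rw [← Finset.add_sum_erase _ _ (Finset.mem_univ k), ← Finset.add_sum_erase _ _ (Finset.mem_univ k)]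
  have hrest : ∀ w : F, ∀ i ∈ Finset.univ.erase k,
      (Function.update a ⟨2 * k.1, by have := k.2; omega⟩ w ⟨2 * i.1, by have := i.2; omega⟩ +
          x ⟨2 * i.1, by have := i.2; omega⟩) *
        (Function.update a ⟨2 * k.1, by have := k.2; omega⟩ w ⟨2 * i.1 + 1, by have := i.2; omega⟩ +
          x ⟨2 * i.1 + 1, by have := i.2; omega⟩) =
      (a ⟨2 * i.1, by have := i.2; omega⟩ + x ⟨2 * i.1, by have := i.2; omega⟩) *
        (a ⟨2 * i.1 + 1, by have := i.2; omega⟩ + x ⟨2 * i.1 + 1, by have := i.2; omega⟩) := by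
    intro w i hi
    have hik : i ≠ k := Finset.ne_of_mem_erase hi
    have hv : i.1 ≠ k.1 := fun h => hik (Fin.ext h)
    have h1 : (⟨2 * i.1, by have := i.2; omega⟩ : Fin (2 * n)) ≠ ⟨2 * k.1, by have := k.2; omega⟩ := by
      simp only [ne_eq, Fin.mk.injEq]; omega
    have h2 : (⟨2 * i.1 + 1, by have := i.2; omega⟩ : Fin (2 * n)) ≠ ⟨2 * k.1, by have := k.2; omega⟩ := by
      simp only [ne_eq, Fin.mk.injEq]; omega
    rw [Function.update_of_ne h1, Function.update_of_ne h2]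
  rw [Finset.sum_congr rfl (hrest v), Finset.sum_congr rfl (hrest 0)]
  have he : (⟨2 * k.1 + 1, by have := k.2; omega⟩ : Fin (2 * n)) ≠ ⟨2 * k.1, by have := k.2; omega⟩ := by
    simp only [ne_eq, Fin.mk.injEq]; omega
  rw [Function.update_of_ne he, Function.update_of_ne he, Function.update_self, Function.update_self]
  ring

/-- The pseudo-dot-product family (a₁+x₁)(a₂+x₂)+⋯+(a_{m-1}+x_{m-1})(a_m+x_m)
over a finite field, with uniform independent keys, is Δ-universal (m = 2n even). -/
theorem stmt6 {F : Type*} [Field F] [Fintype F] (n : ℕ) :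
    ∀ c : F, ∀ x x' : Fin (2 * n) → F, x ≠ x' →
      prob (fun a : Fin (2 * n) → F =>
        (∑ i : Fin n, (a ⟨2 * i.1, by have := i.2; omega⟩ + x ⟨2 * i.1, by have := i.2; omega⟩) *
            (a ⟨2 * i.1 + 1, by have := i.2; omega⟩ + x ⟨2 * i.1 + 1, by have := i.2; omega⟩)) =
        (∑ i : Fin n, (a ⟨2 * i.1, by have := i.2; omega⟩ + x' ⟨2 * i.1, by have := i.2; omega⟩) *
            (a ⟨2 * i.1 + 1, by have := i.2; omega⟩ + x' ⟨2 * i.1 + 1, by have := i.2; omega⟩)) + c)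
        ≤ 1 / (Fintype.card F) := by
  classical
  intro c x x' hne
  obtain ⟨j, hj⟩ : ∃ j, x j ≠ x' j := by
    by_contra h
    push_neg at h
    exact hne (funext h)
  have hn : 0 < n := by have := j.2; omega
  -- find an update index p and nonzero slope s
  have key : ∃ (p : Fin (2 * n)) (s : F), s ≠ 0 ∧
      ∀ (a : Fin (2 * n) → F) (v : F),
        Hsum x (Function.update a p v) - Hsum x' (Function.update a p v) =
          (Hsum x (Function.update a p 0) - Hsum x' (Function.update a p 0)) + v * s := by
    obtain ⟨k, hk⟩ : ∃ k : Fin n, (j : ℕ) = 2 * k.1 ∨ (j : ℕ) = 2 * k.1 + 1 :=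
      ⟨⟨j.1 / 2, by have := j.2; omega⟩, by
        show (j : ℕ) = 2 * (j.1 / 2) ∨ (j : ℕ) = 2 * (j.1 / 2) + 1
        omega⟩
    rcases hk with h | h
    · have hje : j = (⟨2 * k.1, by have := k.2; omega⟩ : Fin (2 * n)) := Fin.ext h
      rw [hje] at hj
      refine ⟨⟨2 * k.1 + 1, by have := k.2; omega⟩, _, sub_ne_zero_of_ne hj, ?_⟩
      intro a v
      rw [Hsum_update_odd x a k v, Hsum_update_odd x' a k v]
      ring
    · have hje : j = (⟨2 * k.1 + 1, by have := k.2; omega⟩ : Fin (2 * n)) := Fin.ext h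
      rw [hje] at hj
      refine ⟨⟨2 * k.1, by have := k.2; omega⟩, _, sub_ne_zero_of_ne hj, ?_⟩
      intro a v
      rw [Hsum_update_even x a k v, Hsum_update_even x' a k v]
      ring
  obtain ⟨p, s, hs, hlin⟩ := key
  unfold prob
  set P := (fun a : Fin (2 * n) → F =>
        (∑ i : Fin n, (a ⟨2 * i.1, by have := i.2; omega⟩ + x ⟨2 * i.1, by have := i.2; omega⟩) *
            (a ⟨2 * i.1 + 1, by have := i.2; omega⟩ + x ⟨2 * i.1 + 1, by have := i.2; omega⟩)) =
        (∑ i : Fin n, (a ⟨2 * i.1, by have := i.2; omega⟩ + x' ⟨2 * i.1, by have := i.2; omega⟩) *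
            (a ⟨2 * i.1 + 1, by have := i.2; omega⟩ + x' ⟨2 * i.1 + 1, by have := i.2; omega⟩)) + c) with hP
  set S := Finset.univ.filter P with hS
  have hPH : ∀ a, P a ↔ Hsum x a = Hsum x' a + c := by
    intro a; rw [hP]; rfl
  -- injectivity of restriction
  have hinj : Function.Injective
      (fun a : {a : Fin (2 * n) → F // a ∈ S} => (fun i : {i : Fin (2 * n) // i ≠ p} => a.1 i.1)) := by
    rintro ⟨a, ha⟩ ⟨a', ha'⟩ hfun
    have heq : ∀ i : Fin (2 * n), i ≠ p → a i = a' i := by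
      intro i hi
      exact congrFun hfun ⟨i, hi⟩
    have ha1 : Hsum x a = Hsum x' a + c := (hPH a).1 (Finset.mem_filter.1 ha).2
    have ha2 : Hsum x a' = Hsum x' a' + c := (hPH a').1 (Finset.mem_filter.1 ha').2
    have hupd : a' = Function.update a p (a' p) := by
      funext i
      by_cases hip : i = p
      · subst hip; rw [Function.update_self]
      · rw [Function.update_of_ne hip]; exact (heq i hip).symm
    have hupd0 : a = Function.update a p (a p) := (Function.update_eq_self p a).symm
    have e1 := hlin a (a p)
    have e2 := hlin a (a' p)
    rw [← hupd0] at e1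
    rw [← hupd] at e2
    have : (a p) * s = (a' p) * s := by
      have h1 : Hsum x a - Hsum x' a = c := by rw [ha1]; ring
      have h2 : Hsum x a' - Hsum x' a' = c := by rw [ha2]; ring
      rw [h1] at e1; rw [h2] at e2
      linear_combination e2 - e1
    have hap : a p = a' p := by
      exact mul_right_cancel₀ hs this
    have : a = a' := by
      funext i
      by_cases hip : i = p
      · subst hip; exact hap
      · exact heq i hip
    exact Subtype.ext this
  have hq1 : 0 < Fintype.card F := Fintype.card_pos
  have hcardle : S.card ≤ Fintype.card F ^ (2 * n - 1) := by
    have := Fintype.card_le_of_injective _ hinj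
    rwa [Fintype.card_coe, Fintype.card_fun, Fintype.card_subtype_compl,
      Fintype.card_subtype_eq, Fintype.card_fin] at this
  -- final computation
  have hcardpi : Fintype.card (Fin (2 * n) → F) = Fintype.card F ^ (2 * n) := by
    rw [Fintype.card_fun, Fintype.card_fin]
  rw [hcardpi, Nat.cast_pow]
  have hq1' : (0 : ℝ) < (Fintype.card F : ℝ) := by exact_mod_cast hq1
  have hpow : (0 : ℝ) < (Fintype.card F : ℝ) ^ (2 * n) := by positivity
  rw [div_le_div_iff₀ hpow hq1']
  have hnat : S.card * Fintype.card F ≤ Fintype.card F ^ (2 * n) := by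
    calc S.card * Fintype.card F ≤ Fintype.card F ^ (2 * n - 1) * Fintype.card F :=
          Nat.mul_le_mul_right _ hcardle
    _ = Fintype.card F ^ (2 * n - 1 + 1) := (pow_succ _ _).symm
    _ = Fintype.card F ^ (2 * n) := by congr 1; omega
  calc (S.card : ℝ) * (Fintype.card F : ℝ) ≤ (Fintype.card F : ℝ) ^ (2 * n) := by
        exact_mod_cast hnat
    _ = 1 * (Fintype.card F : ℝ) ^ (2 * n) := by ring
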